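/- For all real a, b with 0 < a ≤ b, and all ρ ≥ 0, one has |(1/a)·sin²(√a·ρ) − (1/b)·sin²(√b·ρ)| ≤ (ρ⁴/3)·(b − a). -/

import Mathlib

open Real Set

private lemma stmt2_aux_cube (t : ℝ) (ht : 0 ≤ t) :
    |Real.sin t - t * Real.cos t| ≤ t ^ 3 / 3 := by
  have key : ∀ (ε : ℝ), ε = 1 ∨ ε = -1 →
      ε * (Real.sin t - t * Real.cos t) ≤ t ^ 3 / 3 := by
    intro ε hε
    set F : ℝ → ℝ := fun s => s ^ 3 / 3 - ε * (Real.sin s - s * Real.cos s) with hF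
    have hd : ∀ s : ℝ, HasDerivAt F (s * (s - ε * Real.sin s)) s := by
      intro s
      have h1 : HasDerivAt (fun s : ℝ => Real.sin s - s * Real.cos s) (s * Real.sin s) s := by
        have := (Real.hasDerivAt_sin s).sub ((hasDerivAt_id s).mul (Real.hasDerivAt_cos s))
        refine this.congr_deriv ?_; simp [id]; try ring
      have h2 : HasDerivAt (fun s : ℝ => s ^ 3 / 3) (s ^ 2) s := by
        have := (hasDerivAt_pow 3 s).div_const 3
        refine this.congr_deriv ?_; simp [id]; try ring
      have := h2.sub (h1.const_mul ε)
      refine this.congr_deriv ?_; ring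
    have hmono : MonotoneOn F (Icc 0 t) := by
      apply monotoneOn_of_deriv_nonneg (convex_Icc 0 t)
      · exact fun s _ => (hd s).continuousAt.continuousWithinAt
      · exact fun s _ => (hd s).differentiableAt.differentiableWithinAt
      · intro s hs
        rw [(hd s).deriv]
        rcases hs with hs
        rw [interior_Icc] at hs
        have hs0 : 0 < s := hs.1
        have hsin : |Real.sin s| ≤ s := by
          calc |Real.sin s| ≤ |s| := Real.abs_sin_le_abs
          _ = s := abs_of_pos hs0
        have : ε * Real.sin s ≤ s := by
          rcases hε with h | h <;> rw [h] <;> [skip; rw [neg_one_mul]] <;>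
            nlinarith [abs_le.mp hsin]
        nlinarith
    have h0 : F 0 ≤ F t := hmono (left_mem_Icc.mpr ht) (right_mem_Icc.mpr ht) ht
    simp [hF] at h0
    linarith
  rw [abs_le]
  constructor
  · have := key (-1) (Or.inr rfl); linarith
  · have := key 1 (Or.inl rfl); linarith

noncomputable def stmt2_Ff (ρ : ℝ) : ℝ → ℝ :=
  fun x => (1 / x) * Real.sin (Real.sqrt x * ρ) ^ 2

noncomputable def stmt2_Df (ρ : ℝ) : ℝ → ℝ := fun x =>
  -(x ^ 2)⁻¹ * Real.sin (Real.sqrt x * ρ) ^ 2 +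
    x⁻¹ * (2 * Real.sin (Real.sqrt x * ρ) ^ 1 *
      (Real.cos (Real.sqrt x * ρ) * (1 / (2 * Real.sqrt x) * ρ)))

private lemma stmt2_hasDeriv (ρ x : ℝ) (hx : 0 < x) :
    HasDerivAt (stmt2_Ff ρ) (stmt2_Df ρ x) x := by
  have h1 : HasDerivAt Real.sqrt (1 / (2 * Real.sqrt x)) x :=
    Real.hasDerivAt_sqrt hx.ne'
  have h2 : HasDerivAt (fun x => Real.sqrt x * ρ) (1 / (2 * Real.sqrt x) * ρ) x :=
    h1.mul_const ρ
  have h3 : HasDerivAt (fun x => Real.sin (Real.sqrt x * ρ))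
      (Real.cos (Real.sqrt x * ρ) * (1 / (2 * Real.sqrt x) * ρ)) x :=
    (Real.hasDerivAt_sin _).comp x h2
  have h4 := h3.pow 2
  have h5 : HasDerivAt (fun x : ℝ => x⁻¹) (-(x ^ 2)⁻¹) x := hasDerivAt_inv hx.ne'
  have h6 := h5.mul h4
  unfold stmt2_Ff stmt2_Df
  simp only [one_div]
  refine h6.congr_deriv ?_
  push_cast [Pi.pow_apply]
  ring

private lemma stmt2_bound (ρ c : ℝ) (hρ : 0 ≤ ρ) (hc : 0 < c) :
    |stmt2_Df ρ c| ≤ ρ ^ 4 / 3 := by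
  set s := Real.sqrt c with hsdef
  have hs : 0 < s := Real.sqrt_pos.mpr hc
  have hs2 : s ^ 2 = c := Real.sq_sqrt hc.le
  set t := s * ρ with htdef
  have ht : 0 ≤ t := mul_nonneg hs.le hρ
  have heq : stmt2_Df ρ c = Real.sin t * (t * Real.cos t - Real.sin t) / s ^ 4 := by
    unfold stmt2_Df
    rw [← hsdef, ← hs2]
    field_simp
    ring
  rw [heq, abs_div, abs_of_pos (by positivity : (0:ℝ) < s ^ 4), abs_mul]
  have h1 : |Real.sin t| ≤ t := by
    calc |Real.sin t| ≤ |t| := Real.abs_sin_le_abs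
    _ = t := abs_of_nonneg ht
  have h2 : |t * Real.cos t - Real.sin t| ≤ t ^ 3 / 3 := by
    rw [show t * Real.cos t - Real.sin t = -(Real.sin t - t * Real.cos t) by ring, abs_neg]
    exact stmt2_aux_cube t ht
  have h3 : |Real.sin t| * |t * Real.cos t - Real.sin t| ≤ t * (t ^ 3 / 3) :=
    mul_le_mul h1 h2 (abs_nonneg _) ht
  have h4 : t ^ 4 = s ^ 4 * ρ ^ 4 := by rw [htdef]; ring
  rw [div_le_iff₀ (by positivity)]
  calc |Real.sin t| * |t * Real.cos t - Real.sin t| ≤ t * (t ^ 3 / 3) := h3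
  _ = ρ ^ 4 / 3 * s ^ 4 := by rw [show t * (t^3/3) = t^4/3 by ring, h4]; ring

theorem stmt_2 (a b ρ : ℝ) (ha : 0 < a) (hab : a ≤ b) (hρ : 0 ≤ ρ) :
    |(1 / a) * Real.sin (Real.sqrt a * ρ) ^ 2 - (1 / b) * Real.sin (Real.sqrt b * ρ) ^ 2| ≤
      ρ ^ 4 / 3 * (b - a) := by
  rcases eq_or_lt_of_le hab with rfl | hlt
  · simp
  · have hcont : ContinuousOn (stmt2_Ff ρ) (Icc a b) := fun x hx =>
      (stmt2_hasDeriv ρ x (lt_of_lt_of_le ha hx.1)).continuousAt.continuousWithinAt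
    obtain ⟨c, hc, hDc⟩ := exists_hasDerivAt_eq_slope (stmt2_Ff ρ) (stmt2_Df ρ) hlt hcont
      (fun x hx => stmt2_hasDeriv ρ x (lt_trans ha hx.1))
    have hba : (0:ℝ) < b - a := by linarith
    have hdiff : stmt2_Ff ρ b - stmt2_Ff ρ a = stmt2_Df ρ c * (b - a) := by
      rw [hDc]; field_simp
    have hLHS : (1 / a) * Real.sin (Real.sqrt a * ρ) ^ 2 -
        (1 / b) * Real.sin (Real.sqrt b * ρ) ^ 2 = -(stmt2_Df ρ c * (b - a)) := by
      rw [← hdiff]; unfold stmt2_Ff; ring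
    rw [hLHS, abs_neg, abs_mul, abs_of_pos hba]
    exact mul_le_mul_of_nonneg_right (stmt2_bound ρ c hρ (lt_trans ha hc.1)) hba.le
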